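/- Let k ≥ 1, T ∈ Tab(2,k), a ∈ ℂ∖{0}, and let (i,p) ≠ (i',p') be two positions with 1 ≤ i ≤ i' ≤ 2 and 1 ≤ p, p' ≤ k; set α = T_{i,p} and β = T_{i',p'}. If there exists (l,b) ∈ {1,2}×(ℂ∖{0}) with z_{l,b}(⟦α⟧_{aq^{2(p−i)}}) > 0 and z_{l,b}(⟦β⟧_{aq^{2(p'−i')}}) > 0 (the positive parts of the two boxes share a variable), then i = 1, i' = 2, and one of the following holds: (i) p = p' and (α,β) = (2,3̄), and the shared variable is of the form Z_{2,c}; (ii) p = p'+1 and (α,β) = (1,2̄), and the shared variable is of the form Z_{1,c}; (iii) p' = p+1, α = 3 and β ∈ {4,4̄}, and the shared variable is of the form Z_{1,c}. -/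

import Mathlib

noncomputable section

/-- The set `B = {1,2,3,4,4̄,3̄,2̄,1̄}`. -/
inductive BB : Type
  | b1 | b2 | b3 | b4 | b4' | b3' | b2' | b1'
  deriving DecidableEq

instance : Fintype BB where
  elems := {.b1, .b2, .b3, .b4, .b4', .b3', .b2', .b1'}
  complete := by intro x; cases x <;> decide

/-- The rank used to define the partial order on `B`
(`4` and `4̄` get the same rank, making them incomparable). -/
def BB.rank : BB → ℕ
  | .b1 => 0 | .b2 => 1 | .b3 => 2 | .b4 => 3 | .b4' => 3
  | .b3' => 4 | .b2' => 5 | .b1' => 6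

/-- The partial order `⪯` on `B` : `1 ≺ 2 ≺ 3 ≺ 4 ≺ 3̄ ≺ 2̄ ≺ 1̄` and `3 ≺ 4̄ ≺ 3̄`,
with `4` and `4̄` incomparable. -/
def BB.le (x y : BB) : Prop := x = y ∨ x.rank < y.rank

/-- The strict order `≺` on `B`. -/
def BB.lt (x y : BB) : Prop := x.rank < y.rank

/-- Monomials: the free abelian group on `{1,2} × ℂˣ`, written additively;
`Finsupp.single (i,b) 1` corresponds to the generator `Z_{i+1,b}`. -/
abbrev Mon2 : Type := (Fin 2 × ℂˣ) →₀ ℤ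

/-- The group ring `ℤ[G]`. -/
abbrev LR2 : Type := AddMonoidAlgebra ℤ Mon2

/-- The generator `Z_{i,b}` (with `i : Fin 2` indexing `{1,2}`). -/
def Zv (i : Fin 2) (b : ℂˣ) : Mon2 := Finsupp.single (i, b) 1

/-- `j = e^{2iπ/3}`, a primitive cube root of unity, as a unit of `ℂ`. -/
def jC : ℂˣ := Units.mk0 (Complex.exp (2 * Real.pi * Complex.I / 3)) (Complex.exp_ne_zero _)

/-- The boxes `⟦α⟧_a ∈ G` for `α ∈ B` (written additively). -/
def box (q : ℂˣ) : BB → ℂˣ → Mon2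
  | .b1, a => Zv 0 a
  | .b2, a => -Zv 0 (a * q ^ 2) + Zv 1 (a ^ 3 * q ^ 3)
  | .b3, a => -Zv 1 (a ^ 3 * q ^ 9) + Zv 0 (a * q ^ 2 * jC) + Zv 0 (a * q ^ 2 * jC ^ 2)
  | .b4, a => Zv 0 (a * q ^ 2 * jC) - Zv 0 (a * q ^ 4 * jC ^ 2)
  | .b4', a => Zv 0 (a * q ^ 2 * jC ^ 2) - Zv 0 (a * q ^ 4 * jC)
  | .b3', a => -Zv 0 (a * q ^ 4 * jC) - Zv 0 (a * q ^ 4 * jC ^ 2) + Zv 1 (a ^ 3 * q ^ 9)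
  | .b2', a => Zv 0 (a * q ^ 4) - Zv 1 (a ^ 3 * q ^ 15)
  | .b1', a => -Zv 0 (a * q ^ 6)

/-- `Tab(1,k)`: sequences `(T_1,…,T_k)` in `B` with `T_p ⪯ T_{p+1}`. -/
def IsTab1 (k : ℕ) (T : Fin k → BB) : Prop :=
  ∀ (p : ℕ) (h : p + 1 < k), BB.le (T ⟨p, Nat.lt_of_succ_lt h⟩) (T ⟨p + 1, h⟩)

/-- The monomial `m^{(1)}_{T,a} = ∏_{p=1}^{k} ⟦T_p⟧_{aq^{2(p-1)}}` (written additively). -/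
def m1 (q : ℂˣ) {k : ℕ} (T : Fin k → BB) (a : ℂˣ) : Mon2 :=
  ∑ p : Fin k, box q (T p) (a * q ^ (2 * (p : ℕ)))

/-- `Tab(2,k)`: two-row arrays with entries in `B` satisfying (θ1)–(θ4).
Row `i : Fin 2` corresponds to row `i+1` of the paper. -/
def IsTab2 (k : ℕ) (T : Fin 2 → Fin k → BB) : Prop :=
  (∀ i : Fin 2, IsTab1 k (T i)) ∧
  (∀ p : Fin k, ¬ BB.le (T 1 p) (T 0 p)) ∧
  (¬ ∃ p p' : Fin k, p < p' ∧
      (∀ r : Fin k, p ≤ r → r < p' → T 0 r = BB.b3) ∧ T 0 p' = BB.b4 ∧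
      T 1 p = BB.b4 ∧ (∀ r : Fin k, p < r → r ≤ p' → T 1 r = BB.b3')) ∧
  (¬ ∃ p p' : Fin k, p < p' ∧
      (∀ r : Fin k, p ≤ r → r < p' → T 0 r = BB.b3) ∧ T 0 p' = BB.b4' ∧
      T 1 p = BB.b4' ∧ (∀ r : Fin k, p < r → r ≤ p' → T 1 r = BB.b3'))

/-- The monomial `m^{(2)}_{T,a} = ∏_{i∈{1,2}} ∏_{p=1}^{k} ⟦T_{i,p}⟧_{aq^{2(p-i)}}`
(written additively; rows and columns are 0-indexed). -/
def m2 (q : ℂˣ) {k : ℕ} (T : Fin 2 → Fin k → BB) (a : ℂˣ) : Mon2 :=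
  ∑ i : Fin 2, ∑ p : Fin k, box q (T i p) (a * q ^ (2 * ((p : ℤ) - (i : ℤ))))

section Aux

variable (q : ℂˣ)

lemma fin2cases (i : Fin 2) : i = 0 ∨ i = 1 := by
  obtain ⟨iv, hi⟩ := i
  interval_cases iv
  · exact Or.inl rfl
  · exact Or.inr rfl

lemma BB_le_trans {x y z : BB} (h1 : BB.le x y) (h2 : BB.le y z) : BB.le x z := by
  rcases h1 with rfl | h1
  · exact h2
  · rcases h2 with rfl | h2
    · exact Or.inr h1
    · exact Or.inr (h1.trans h2)

lemma BB_rank_le {x y : BB} (h : BB.le x y) : x.rank ≤ y.rank := by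
  rcases h with rfl | h
  · exact le_rfl
  · exact h.le

lemma row_le_aux {k : ℕ} {R : Fin k → BB} (h : IsTab1 k R) (d : ℕ) :
    ∀ (p p' : Fin k), (p' : ℕ) = (p : ℕ) + d → BB.le (R p) (R p') := by
  induction d with
  | zero =>
    intro p p' hpp
    have : p = p' := Fin.ext (by omega)
    subst this
    exact Or.inl rfl
  | succ d ih =>
    intro p p' hpp
    have hlt : (p : ℕ) + d + 1 < k := by have := p'.isLt; omega
    have h1 := ih p ⟨(p : ℕ) + d, by omega⟩ rfl
    have h2 := h ((p : ℕ) + d) hlt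
    have e : (⟨(p : ℕ) + d + 1, hlt⟩ : Fin k) = p' := Fin.ext (by simp; omega)
    rw [← e]
    exact BB_le_trans h1 h2

lemma row_le {k : ℕ} {R : Fin k → BB} (h : IsTab1 k R) {p p' : Fin k}
    (hpp : (p : ℕ) ≤ (p' : ℕ)) : BB.le (R p) (R p') :=
  row_le_aux h ((p' : ℕ) - (p : ℕ)) p p' (by omega)

lemma row_rank {k : ℕ} {R : Fin k → BB} (h : IsTab1 k R) {p p' : Fin k}
    (hpp : (p : ℕ) ≤ (p' : ℕ)) : (R p).rank ≤ (R p').rank :=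
  BB_rank_le (row_le h hpp)

lemma same_contra {k : ℕ} {T : Fin 2 → Fin k → BB} (hT : IsTab2 k T) {p p' : Fin k}
    (hpp : (p : ℕ) ≤ (p' : ℕ)) (h : T 0 p = T 1 p') : False := by
  apply hT.2.1 p
  rw [h]
  exact row_le (hT.1 1) hpp

lemma down_contra {k : ℕ} {T : Fin 2 → Fin k → BB} (hT : IsTab2 k T) {p p' : Fin k}
    (hpp : (p : ℕ) ≤ (p' : ℕ)) (h : (T 1 p').rank < (T 0 p).rank) : False := by
  apply hT.2.1 p
  exact Or.inr (lt_of_le_of_lt (BB_rank_le (row_le (hT.1 1) hpp)) h)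

lemma qone (hq : ∀ n : ℕ, 0 < n → (q : ℂ) ^ n ≠ 1) {d : ℤ} (h : q ^ d = 1) : d = 0 := by
  have key : ∀ d : ℤ, 0 < d → q ^ d = 1 → False := by
    intro d hd hq1
    apply hq d.toNat (by omega)
    have h4 : q ^ (d.toNat) = 1 := by
      rw [← zpow_natCast q, Int.toNat_of_nonneg hd.le]; exact hq1
    simpa using congrArg Units.val h4
  rcases lt_trichotomy d 0 with h1 | h1 | h1
  · exact (key (-d) (by omega) (by rw [zpow_neg, h]; simp)).elim
  · exact h1
  · exact (key d h1 h).elim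

lemma qz (hq : ∀ n : ℕ, 0 < n → (q : ℂ) ^ n ≠ 1) {m n : ℤ} (h : q ^ m = q ^ n) : m = n := by
  have h1 : q ^ (m - n) = 1 := by
    rw [zpow_sub, h]
    simp
  have := qone q hq h1
  omega

lemma jprim : IsPrimitiveRoot (jC : ℂ) 3 := by
  have h := Complex.isPrimitiveRoot_exp 3 (by norm_num)
  norm_num at h
  exact h

lemma jC_cube : (jC : ℂˣ) ^ (3 : ℕ) = 1 := by
  apply Units.ext
  push_cast
  exact jprim.pow_eq_one

lemma jpow_inj {f g : ℕ} (hf : f < 3) (hg : g < 3) (h : (jC : ℂˣ) ^ f = jC ^ g) : f = g := by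
  have h' : (jC : ℂ) ^ f = (jC : ℂ) ^ g := by exact_mod_cast congrArg Units.val h
  exact jprim.pow_inj hf hg h'

lemma cube_form (m : ℤ) (f : ℕ) :
    (q ^ m * jC ^ f) ^ (3 : ℕ) = q ^ (m * 3) * ((jC : ℂˣ) ^ (3 : ℕ)) ^ f := by
  rw [mul_pow, ← zpow_natCast (q ^ m), ← zpow_mul, ← pow_mul, mul_comm f 3, pow_mul]
  norm_num

lemma key0 (hq : ∀ n : ℕ, 0 < n → (q : ℂ) ^ n ≠ 1) (a : ℂˣ) {m n : ℤ} {f g : ℕ} (hf : f < 3) (hg : g < 3)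
    (h : a * q ^ m * jC ^ f = a * q ^ n * jC ^ g) : m = n ∧ f = g := by
  rw [mul_assoc, mul_assoc] at h
  have h' := mul_left_cancel h
  have hcube := congrArg (· ^ (3 : ℕ)) h'
  simp only [cube_form, jC_cube, one_pow, mul_one] at hcube
  have hmn : m = n := by have := qz q hq hcube; omega
  subst hmn
  have hfg := mul_left_cancel h'
  exact ⟨rfl, jpow_inj hf hg hfg⟩

lemma key1 (hq : ∀ n : ℕ, 0 < n → (q : ℂ) ^ n ≠ 1) (a : ℂˣ) {m n : ℤ} (h : a ^ 3 * q ^ m = a ^ 3 * q ^ n) : m = n :=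
  qz q hq (mul_left_cancel h)

end Aux

def pos0 : BB → ℕ → ℕ → Prop
  | .b1, e, f => e = 0 ∧ f = 0
  | .b3, e, f => e = 2 ∧ (f = 1 ∨ f = 2)
  | .b4, e, f => e = 2 ∧ f = 1
  | .b4', e, f => e = 2 ∧ f = 2
  | .b2', e, f => e = 4 ∧ f = 0
  | _, _, _ => False

def pos1 : BB → ℕ → Prop
  | .b2, e => e = 3
  | .b3', e => e = 9
  | _, _ => False

lemma nf0 (q a : ℂˣ) (z : ℤ) (e f : ℕ) :
    a * q ^ z * q ^ e * jC ^ f = a * q ^ (z + (e : ℤ)) * jC ^ f := by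
  rw [zpow_add, zpow_natCast, ← mul_assoc]

lemma nf1 (q a : ℂˣ) (z : ℤ) (e : ℕ) :
    (a * q ^ z) ^ 3 * q ^ e = a ^ 3 * q ^ (3 * z + (e : ℤ)) := by
  rw [mul_pow, ← zpow_natCast (q ^ z) 3, ← zpow_mul, ← zpow_natCast q e, mul_assoc,
    ← zpow_add]
  congr 1
  push_cast
  ring_nf

lemma mk0 {α : BB} (P : Prop) {l : Fin 2} {b : ℂˣ} {q a : ℂˣ} {z : ℤ} (c : ℂˣ) (e f : ℕ)
    (hf : f < 3) (hp : pos0 α e f) (hc : ((0 : Fin 2), c) = (l, b))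
    (hcb : c = a * q ^ (z + (e : ℤ)) * jC ^ f) :
    (∃ e f : ℕ, f < 3 ∧ pos0 α e f ∧ l = 0 ∧ b = a * q ^ (z + (e : ℤ)) * jC ^ f) ∨ P := by
  injection hc with hl hb
  exact Or.inl ⟨e, f, hf, hp, hl.symm, by rw [← hb, hcb]⟩

lemma mk1 {α : BB} (P : Prop) {l : Fin 2} {b : ℂˣ} {q a : ℂˣ} {z : ℤ} (c : ℂˣ) (e : ℕ)
    (hp : pos1 α e) (hc : ((1 : Fin 2), c) = (l, b))
    (hcb : c = a ^ 3 * q ^ (3 * z + (e : ℤ))) :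
    P ∨ (∃ e : ℕ, pos1 α e ∧ l = 1 ∧ b = a ^ 3 * q ^ (3 * z + (e : ℤ))) := by
  injection hc with hl hb
  exact Or.inr ⟨e, hp, hl.symm, by rw [← hb, hcb]⟩

lemma box_pos (q : ℂˣ) (α : BB) (a : ℂˣ) (z : ℤ) (l : Fin 2) (b : ℂˣ)
    (h : 0 < box q α (a * q ^ z) (l, b)) :
    (∃ e f : ℕ, f < 3 ∧ pos0 α e f ∧ l = 0 ∧ b = a * q ^ (z + (e : ℤ)) * jC ^ f) ∨
    (∃ e : ℕ, pos1 α e ∧ l = 1 ∧ b = a ^ 3 * q ^ (3 * z + (e : ℤ))) := by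
  cases α with
  | b1 =>
    simp only [box, Zv, Finsupp.single_apply] at h
    split_ifs at h <;> try omega
    exact mk0 _ (a * q ^ z) 0 0 (by norm_num) (by simp [pos0]) (by assumption) (by simp)
  | b2 =>
    simp only [box, Zv, Finsupp.add_apply, Finsupp.neg_apply, Finsupp.single_apply] at h
    split_ifs at h <;> try omega
    all_goals exact mk1 _ ((a * q ^ z) ^ 3 * q ^ 3) 3 (by simp [pos1]) (by assumption) (nf1 q a z 3)
  | b3 =>
    simp only [box, Zv, Finsupp.add_apply, Finsupp.neg_apply, Finsupp.single_apply] at h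
    split_ifs at h <;> try omega
    all_goals first
      | exact mk0 _ (a * q ^ z * q ^ 2 * jC) 2 1 (by norm_num) (by simp [pos0]) (by assumption) (by rw [← nf0 q a z 2 1, pow_one])
      | exact mk0 _ (a * q ^ z * q ^ 2 * jC ^ 2) 2 2 (by norm_num) (by simp [pos0]) (by assumption) (nf0 q a z 2 2)
  | b4 =>
    simp only [box, Zv, Finsupp.sub_apply, Finsupp.single_apply] at h
    split_ifs at h <;> try omega
    all_goals exact mk0 _ (a * q ^ z * q ^ 2 * jC) 2 1 (by norm_num) (by simp [pos0]) (by assumption) (by rw [← nf0 q a z 2 1, pow_one])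
  | b4' =>
    simp only [box, Zv, Finsupp.sub_apply, Finsupp.single_apply] at h
    split_ifs at h <;> try omega
    all_goals exact mk0 _ (a * q ^ z * q ^ 2 * jC ^ 2) 2 2 (by norm_num) (by simp [pos0]) (by assumption) (nf0 q a z 2 2)
  | b3' =>
    simp only [box, Zv, Finsupp.add_apply, Finsupp.sub_apply, Finsupp.neg_apply,
      Finsupp.single_apply] at h
    split_ifs at h <;> try omega
    all_goals exact mk1 _ ((a * q ^ z) ^ 3 * q ^ 9) 9 (by simp [pos1]) (by assumption) (nf1 q a z 9)
  | b2' =>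
    simp only [box, Zv, Finsupp.sub_apply, Finsupp.single_apply] at h
    split_ifs at h <;> try omega
    all_goals exact mk0 _ (a * q ^ z * q ^ 4) 4 0 (by norm_num) (by simp [pos0]) (by assumption) (by rw [← nf0 q a z 4 0, pow_zero, mul_one])
  | b1' =>
    simp only [box, Zv, Finsupp.neg_apply, Finsupp.single_apply] at h
    split_ifs at h <;> omega

lemma comb0 {k : ℕ} {T : Fin 2 → Fin k → BB} (hT : IsTab2 k T) {i i' : Fin 2} (hii : i ≤ i')
    {p p' : Fin k} (hne : (i, p) ≠ (i', p')) {e f e' f' : ℕ}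
    (h1 : pos0 (T i p) e f) (h2 : pos0 (T i' p') e' f')
    (hz : 2 * ((p : ℤ) - (i : ℤ)) + (e : ℤ) = 2 * ((p' : ℤ) - (i' : ℤ)) + (e' : ℤ))
    (hf : f = f') :
    i = 0 ∧ i' = 1 ∧
      (((p : ℕ) = (p' : ℕ) + 1 ∧ T i p = BB.b1 ∧ T i' p' = BB.b2') ∨
       ((p' : ℕ) = (p : ℕ) + 1 ∧ T i p = BB.b3 ∧ (T i' p' = BB.b4 ∨ T i' p' = BB.b4'))) := by
  rcases fin2cases i with rfl | rfl <;> rcases fin2cases i' with rfl | rfl <;>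
    norm_num at hz
  · -- i = 0, i' = 0
    exfalso
    cases hA : T 0 p <;> rw [hA] at h1 <;> cases hB : T 0 p' <;> rw [hB] at h2 <;>
      simp only [pos0] at h1 h2 <;>
      obtain ⟨rfl, hf1⟩ := h1 <;> obtain ⟨rfl, hf2⟩ := h2 <;>
      first
        | exact hne (by rw [show p = p' from Fin.ext (by omega)])
        | exact absurd (row_rank (hT.1 0) (p := p) (p' := p') (by omega)) (by rw [hA, hB]; decide)
        | exact absurd (row_rank (hT.1 0) (p := p') (p' := p) (by omega)) (by rw [hA, hB]; decide)
  · -- i = 0, i' = 1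
    cases hA : T 0 p <;> rw [hA] at h1 <;> cases hB : T 1 p' <;> rw [hB] at h2 <;>
      simp only [pos0] at h1 h2 <;>
      obtain ⟨rfl, hf1⟩ := h1 <;> obtain ⟨rfl, hf2⟩ := h2 <;>
      (try subst hf) <;>
      (first | (rcases hf1 with rfl | rfl) | (rcases hf1 with rfl)) <;>
      (first | (rcases hf2 with rfl | rfl) | (rcases hf2 with rfl) | (rcases hf2 with hf2 | hf2) | skip) <;>
      first
        | omega
        | exact ((same_contra hT (p := p) (p' := p') (by omega) (hA.trans hB.symm)).elim)
        | exact ((down_contra hT (p := p) (p' := p') (by omega) (by rw [hA, hB]; decide)).elim)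
        | exact ⟨rfl, rfl, Or.inl ⟨by omega, rfl, rfl⟩⟩
        | exact ⟨rfl, rfl, Or.inr ⟨by omega, rfl, Or.inl rfl⟩⟩
        | exact ⟨rfl, rfl, Or.inr ⟨by omega, rfl, Or.inr rfl⟩⟩
  · -- i = 1, i' = 0
    exact absurd hii (by decide)
  · -- i = 1, i' = 1
    exfalso
    cases hA : T 1 p <;> rw [hA] at h1 <;> cases hB : T 1 p' <;> rw [hB] at h2 <;>
      simp only [pos0] at h1 h2 <;>
      obtain ⟨rfl, hf1⟩ := h1 <;> obtain ⟨rfl, hf2⟩ := h2 <;>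
      first
        | exact hne (by rw [show p = p' from Fin.ext (by omega)])
        | exact absurd (row_rank (hT.1 1) (p := p) (p' := p') (by omega)) (by rw [hA, hB]; decide)
        | exact absurd (row_rank (hT.1 1) (p := p') (p' := p) (by omega)) (by rw [hA, hB]; decide)

lemma comb1 {k : ℕ} {T : Fin 2 → Fin k → BB} (hT : IsTab2 k T) {i i' : Fin 2} (hii : i ≤ i')
    {p p' : Fin k} (hne : (i, p) ≠ (i', p')) {e e' : ℕ}
    (h1 : pos1 (T i p) e) (h2 : pos1 (T i' p') e')
    (hz : 3 * (2 * ((p : ℤ) - (i : ℤ))) + (e : ℤ) = 3 * (2 * ((p' : ℤ) - (i' : ℤ))) + (e' : ℤ)) :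
    i = 0 ∧ i' = 1 ∧ p = p' ∧ T i p = BB.b2 ∧ T i' p' = BB.b3' := by
  rcases fin2cases i with rfl | rfl <;> rcases fin2cases i' with rfl | rfl <;>
    norm_num at hz
  · exfalso
    cases hA : T 0 p <;> rw [hA] at h1 <;> cases hB : T 0 p' <;> rw [hB] at h2 <;>
      simp only [pos1] at h1 h2 <;> subst h1 <;> subst h2 <;>
      first
        | exact hne (by rw [show p = p' from Fin.ext (by omega)])
        | exact absurd (row_rank (hT.1 0) (p := p) (p' := p') (by omega)) (by rw [hA, hB]; decide)
        | exact absurd (row_rank (hT.1 0) (p := p') (p' := p) (by omega)) (by rw [hA, hB]; decide)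
  · cases hA : T 0 p <;> rw [hA] at h1 <;> cases hB : T 1 p' <;> rw [hB] at h2 <;>
      simp only [pos1] at h1 h2 <;> subst h1 <;> subst h2 <;>
      first
        | exact ((same_contra hT (p := p) (p' := p') (by omega) (hA.trans hB.symm)).elim)
        | exact ((down_contra hT (p := p) (p' := p') (by omega) (by rw [hA, hB]; decide)).elim)
        | exact ⟨rfl, rfl, Fin.ext (by omega), rfl, rfl⟩
  · exact absurd hii (by decide)
  · exfalso
    cases hA : T 1 p <;> rw [hA] at h1 <;> cases hB : T 1 p' <;> rw [hB] at h2 <;>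
      simp only [pos1] at h1 h2 <;> subst h1 <;> subst h2 <;>
      first
        | exact hne (by rw [show p = p' from Fin.ext (by omega)])
        | exact absurd (row_rank (hT.1 1) (p := p) (p' := p') (by omega)) (by rw [hA, hB]; decide)
        | exact absurd (row_rank (hT.1 1) (p := p') (p' := p) (by omega)) (by rw [hA, hB]; decide)

/-- Shared positive variables between boxes of a two-row tableau `T ∈ Tab(2,k)`:
if the positive parts of the boxes at positions `(i,p)` and `(i',p')` (with `i ≤ i'`)
share a variable `Z_{l,b}`, then `i` is the first row, `i'` the second, and one of three
explicit configurations occurs.  (Rows are indexed by `Fin 2`, row `0` being the first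
row; `l = 1` corresponds to variables `Z_{2,c}` and `l = 0` to variables `Z_{1,c}`.) -/
theorem shared_positive_variable (q : ℂˣ) (hq : ∀ n : ℕ, 0 < n → (q : ℂ) ^ n ≠ 1)
    (k : ℕ) (hk : 1 ≤ k) (T : Fin 2 → Fin k → BB) (hT : IsTab2 k T) (a : ℂˣ)
    (i i' : Fin 2) (hii : i ≤ i') (p p' : Fin k) (hne : (i, p) ≠ (i', p'))
    (l : Fin 2) (b : ℂˣ)
    (h1 : 0 < (box q (T i p) (a * q ^ (2 * ((p : ℤ) - (i : ℤ))))) (l, b))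
    (h2 : 0 < (box q (T i' p') (a * q ^ (2 * ((p' : ℤ) - (i' : ℤ))))) (l, b)) :
    i = 0 ∧ i' = 1 ∧
      ((p = p' ∧ T i p = BB.b2 ∧ T i' p' = BB.b3' ∧ l = 1)
        ∨ ((p : ℕ) = (p' : ℕ) + 1 ∧ T i p = BB.b1 ∧ T i' p' = BB.b2' ∧ l = 0)
        ∨ ((p' : ℕ) = (p : ℕ) + 1 ∧ T i p = BB.b3 ∧
            (T i' p' = BB.b4 ∨ T i' p' = BB.b4') ∧ l = 0)) := by
  have H1 := box_pos q (T i p) a (2 * ((p : ℤ) - (i : ℤ))) l b h1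
  have H2 := box_pos q (T i' p') a (2 * ((p' : ℤ) - (i' : ℤ))) l b h2
  rcases H1 with ⟨e1, f1, hf1lt, hp1, hl1, hb1⟩ | ⟨e1, hp1, hl1, hb1⟩ <;>
    rcases H2 with ⟨e2, f2, hf2lt, hp2, hl2, hb2⟩ | ⟨e2, hp2, hl2, hb2⟩
  · -- both variables of the form `Z_{1,c}`
    obtain ⟨hz, hf⟩ := key0 q hq a hf1lt hf2lt (hb1.symm.trans hb2)
    obtain ⟨hi, hi', hc⟩ := comb0 hT hii hne hp1 hp2 hz hf
    refine ⟨hi, hi', ?_⟩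
    rcases hc with ⟨ha, hb, hcc⟩ | ⟨ha, hb, hcc⟩
    · exact Or.inr (Or.inl ⟨ha, hb, hcc, hl1⟩)
    · exact Or.inr (Or.inr ⟨ha, hb, hcc, hl1⟩)
  · rw [hl1] at hl2; exact absurd hl2 (by decide)
  · rw [hl2] at hl1; exact absurd hl1 (by decide)
  · -- both variables of the form `Z_{2,c}`
    have hz := key1 q hq a (hb1.symm.trans hb2)
    obtain ⟨hi, hi', hpp, hA, hB⟩ := comb1 hT hii hne hp1 hp2 hz
    exact ⟨hi, hi', Or.inl ⟨hpp, hA, hB, hl1⟩⟩
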